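/- Every pure submodule of an RD-coflat right R-module is RD-coflat, and arbitrary direct products and direct sums of RD-coflat right R-modules are RD-coflat. -/

import Mathlib

universe u

open MulOpposite

section RDDefs

variable (R : Type u) [Ring R]

/-- `IsTensorZero R M N l` encodes the statement `∑ mᵢ ⊗ nᵢ = 0` in the tensor product
`M ⊗_R N` of the right `R`-module `M` with the left `R`-module `N`, via the universal
property of the tensor product: every `R`-balanced biadditive map kills the sum. -/
def IsTensorZero (M N : Type u) [AddCommGroup M] [Module Rᵐᵒᵖ M]
    [AddCommGroup N] [Module R N] (l : List (M × N)) : Prop :=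
  ∀ (A : Type u) [AddCommGroup A], ∀ b : M → N → A,
    (∀ m₁ m₂ n, b (m₁ + m₂) n = b m₁ n + b m₂ n) →
    (∀ m n₁ n₂, b m (n₁ + n₂) = b m n₁ + b m n₂) →
    (∀ (r : R) (m : M) (n : N), b (op r • m) n = b m (r • n)) →
    (l.map fun p => b p.1 p.2).sum = 0

/-- A right `R`-module `M` is RD-flat if tensoring with `M` preserves exactness of all
RD-exact sequences of left `R`-modules; equivalently, for every injective linear map
`f : H → F` of left `R`-modules whose image is a relatively divisible submodule
(`rF ∩ f(H) = r f(H)` for all `r`), the induced map `M ⊗ H → M ⊗ F` is injective. -/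
def RDFlat (M : Type u) [AddCommGroup M] [Module Rᵐᵒᵖ M] : Prop :=
  ∀ (H F : Type u) [AddCommGroup H] [Module R H] [AddCommGroup F] [Module R F],
    ∀ f : H →ₗ[R] F, Function.Injective f →
    (∀ (r : R) (h : H) (y : F), f h = r • y → ∃ h' : H, h = r • h') →
    ∀ l : List (M × H),
      IsTensorZero R M F (l.map fun p => (p.1, f p.2)) → IsTensorZero R M H l

/-- A right `R`-module `N` is RD-injective if every homomorphism into `N` from a
relatively divisible submodule of a right `R`-module extends to the whole module. -/
def RDInjective (N : Type u) [AddCommGroup N] [Module Rᵐᵒᵖ N] : Prop :=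
  ∀ (K L : Type u) [AddCommGroup K] [Module Rᵐᵒᵖ K] [AddCommGroup L] [Module Rᵐᵒᵖ L],
    ∀ f : K →ₗ[Rᵐᵒᵖ] L, Function.Injective f →
    (∀ (r : R) (k : K) (y : L), f k = op r • y → ∃ k' : K, k = op r • k') →
    ∀ g : K →ₗ[Rᵐᵒᵖ] N, ∃ h : L →ₗ[Rᵐᵒᵖ] N, h.comp f = g

/-- An injective linear map `f : K → L` of right `R`-modules is pure if every finite
system of linear equations `∑ⱼ xⱼ aᵢⱼ = kᵢ` with constants in `K` which is solvable
in `L` is solvable in `K`. -/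
def IsPure {K L : Type u} [AddCommGroup K] [Module Rᵐᵒᵖ K] [AddCommGroup L]
    [Module Rᵐᵒᵖ L] (f : K →ₗ[Rᵐᵒᵖ] L) : Prop :=
  ∀ (m n : ℕ) (a : Fin m → Fin n → R) (k : Fin m → K),
    (∃ x : Fin n → L, ∀ i, (∑ j, op (a i j) • x j) = f (k i)) →
    ∃ y : Fin n → K, ∀ i, (∑ j, op (a i j) • y j) = k i

/-- A right `R`-module `M` is RD-coflat if every RD-exact sequence `0 → M → P → Q → 0`
is pure-exact, i.e. whenever `M` embeds as a relatively divisible submodule of a right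
module `P`, it is a pure submodule of `P`. -/
def RDCoflat (M : Type u) [AddCommGroup M] [Module Rᵐᵒᵖ M] : Prop :=
  ∀ (P : Type u) [AddCommGroup P] [Module Rᵐᵒᵖ P],
    ∀ f : M →ₗ[Rᵐᵒᵖ] P, Function.Injective f →
    (∀ (r : R) (x : M) (y : P), f x = op r • y → ∃ x' : M, x = op r • x') →
    IsPure R f

/-- A right `R`-module `N` is pure-injective if every homomorphism into `N` from a pure
submodule of a right `R`-module extends to the whole module. -/
def PureInjective (N : Type u) [AddCommGroup N] [Module Rᵐᵒᵖ N] : Prop :=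
  ∀ (K L : Type u) [AddCommGroup K] [Module Rᵐᵒᵖ K] [AddCommGroup L] [Module Rᵐᵒᵖ L],
    ∀ f : K →ₗ[Rᵐᵒᵖ] L, Function.Injective f → IsPure R f →
    ∀ g : K →ₗ[Rᵐᵒᵖ] N, ∃ h : L →ₗ[Rᵐᵒᵖ] N, h.comp f = g

/-- A right `R`-module `F` is pure-projective if every homomorphism from `F` to a
quotient in a pure-exact sequence lifts. -/
def PureProjective (F : Type u) [AddCommGroup F] [Module Rᵐᵒᵖ F] : Prop :=
  ∀ (L Q : Type u) [AddCommGroup L] [Module Rᵐᵒᵖ L] [AddCommGroup Q] [Module Rᵐᵒᵖ Q],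
    ∀ p : L →ₗ[Rᵐᵒᵖ] Q, Function.Surjective p → IsPure R (LinearMap.ker p).subtype →
    ∀ g : F →ₗ[Rᵐᵒᵖ] Q, ∃ h : F →ₗ[Rᵐᵒᵖ] L, p.comp h = g

/-- A right `R`-module `F` is RD-projective if every homomorphism from `F` to a
quotient in an RD-exact sequence (the kernel is a relatively divisible submodule)
lifts. -/
def RDProjective (F : Type u) [AddCommGroup F] [Module Rᵐᵒᵖ F] : Prop :=
  ∀ (L Q : Type u) [AddCommGroup L] [Module Rᵐᵒᵖ L] [AddCommGroup Q] [Module Rᵐᵒᵖ Q],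
    ∀ p : L →ₗ[Rᵐᵒᵖ] Q, Function.Surjective p →
    (∀ (r : R) (x : L), p x = 0 → (∃ y : L, x = op r • y) →
      ∃ z : L, p z = 0 ∧ x = op r • z) →
    ∀ g : F →ₗ[Rᵐᵒᵖ] Q, ∃ h : F →ₗ[Rᵐᵒᵖ] L, p.comp h = g

end RDDefs

/-- Pushout of an RD-monomorphism `f : M → P` along an arbitrary map `g : M → N`:
the map `N → X` is again an RD-monomorphism. -/
theorem exists_rd_pushout (R : Type u) [Ring R] (M P N : Type u)
    [AddCommGroup M] [Module Rᵐᵒᵖ M] [AddCommGroup P] [Module Rᵐᵒᵖ P]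
    [AddCommGroup N] [Module Rᵐᵒᵖ N]
    (f : M →ₗ[Rᵐᵒᵖ] P) (hinj : Function.Injective f)
    (hrd : ∀ (r : R) (x : M) (y : P), f x = op r • y → ∃ x' : M, x = op r • x')
    (g : M →ₗ[Rᵐᵒᵖ] N) :
    ∃ (X : Type u) (_ : AddCommGroup X) (_ : Module Rᵐᵒᵖ X)
      (α : P →ₗ[Rᵐᵒᵖ] X) (β : N →ₗ[Rᵐᵒᵖ] X),
      Function.Injective β ∧
      (∀ (r : R) (x : N) (y : X), β x = op r • y → ∃ x' : N, x = op r • x') ∧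
      ∀ u : M, α (f u) = β (g u) := by
  set S : Submodule Rᵐᵒᵖ (P × N) := LinearMap.range (LinearMap.prod f (-g)) with hS
  refine ⟨(P × N) ⧸ S, inferInstance, inferInstance,
    S.mkQ.comp (LinearMap.inl Rᵐᵒᵖ P N), S.mkQ.comp (LinearMap.inr Rᵐᵒᵖ P N), ?_, ?_, ?_⟩
  · intro u v huv
    have h : ((0 : P), u) - ((0 : P), v) ∈ S :=
      (Submodule.Quotient.eq S).mp (by simpa using huv)
    obtain ⟨m, hm⟩ := h
    have hm1 : f m = 0 := by simpa using congrArg Prod.fst hm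
    have hm0 : m = 0 := hinj (by simpa using hm1)
    have hm2 : -g m = u - v := congrArg Prod.snd hm
    rw [hm0] at hm2
    simpa [sub_eq_zero] using hm2.symm
  · intro r x y hxy
    obtain ⟨⟨p, v⟩, rfl⟩ := S.mkQ_surjective y
    have h : ((0 : P), x) - op r • (p, v) ∈ S := by
      rw [← Submodule.Quotient.eq, Submodule.Quotient.mk_smul]
      simpa using hxy
    obtain ⟨m, hm⟩ := h
    have hm1 : f m = op r • (-p) := by
      have := congrArg Prod.fst hm; simpa [neg_eq_iff_eq_neg, smul_neg] using this
    obtain ⟨m', hm'⟩ := hrd r m (-p) hm1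
    have hm2 : -g m = x - op r • v := congrArg Prod.snd hm
    refine ⟨v - g m', ?_⟩
    have h1 : x = -g m + op r • v := sub_eq_iff_eq_add.mp hm2.symm
    have h2 : x = op r • v - g m := by rw [h1]; abel
    rw [h2, hm', map_smul, smul_sub]
  · intro u
    simp only [LinearMap.comp_apply, LinearMap.inl_apply, LinearMap.inr_apply]
    rw [← sub_eq_zero, ← map_sub, Submodule.mkQ_apply, Submodule.Quotient.mk_eq_zero]
    exact ⟨u, by simp [Prod.ext_iff]⟩

/-- Pure submodules of RD-coflat right `R`-modules are RD-coflat, and direct products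
and direct sums of RD-coflat right `R`-modules are RD-coflat. -/
theorem rdCoflat_pure_submodule_prod_dfinsupp (R : Type u) [Ring R] :
    (∀ (M P : Type u) [AddCommGroup M] [Module Rᵐᵒᵖ M] [AddCommGroup P]
      [Module Rᵐᵒᵖ P], ∀ f : M →ₗ[Rᵐᵒᵖ] P, RDCoflat R P → Function.Injective f →
        IsPure R f → RDCoflat R M) ∧
    (∀ (ι : Type u) (M : ι → Type u) [∀ i, AddCommGroup (M i)]
      [∀ i, Module Rᵐᵒᵖ (M i)], (∀ i, RDCoflat R (M i)) → RDCoflat R (∀ i, M i)) ∧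
    (∀ (ι : Type u) (M : ι → Type u) [∀ i, AddCommGroup (M i)]
      [∀ i, Module Rᵐᵒᵖ (M i)], (∀ i, RDCoflat R (M i)) → RDCoflat R (Π₀ i, M i)) := by
  classical
  refine ⟨?_, ?_, ?_⟩
  · -- pure submodules of RD-coflat modules
    intro M P _ _ _ _ f hP hfinj hfpure
    intro N _ _ g hginj hgrd
    intro m n a k ⟨x, hx⟩
    obtain ⟨X, _, _, α, β, hβinj, hβrd, hcomm⟩ :=
      exists_rd_pushout R M N P g hginj hgrd f
    obtain ⟨w, hw⟩ := hP X β hβinj hβrd m n a (fun i => f (k i))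
      ⟨fun j => α (x j), by
        intro i
        calc (∑ j, op (a i j) • α (x j)) = α (∑ j, op (a i j) • x j) := by
              rw [map_sum]; simp [map_smul]
          _ = β (f (k i)) := by rw [hx i, hcomm]⟩
    exact hfpure m n a k ⟨w, hw⟩
  · -- products
    intro ι M _ _ hM
    intro P _ _ f hfinj hfrd
    intro m n a k ⟨x, hx⟩
    have key : ∀ i₀ : ι, ∃ z : Fin n → M i₀,
        ∀ i, (∑ j, op (a i j) • z j) = k i i₀ := by
      intro i₀
      obtain ⟨X, _, _, α, β, hβinj, hβrd, hcomm⟩ :=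
        exists_rd_pushout R (∀ i, M i) P (M i₀) f hfinj hfrd (LinearMap.proj i₀)
      exact hM i₀ X β hβinj hβrd m n a (fun i => k i i₀)
        ⟨fun j => α (x j), by
          intro i
          calc (∑ j, op (a i j) • α (x j)) = α (∑ j, op (a i j) • x j) := by
                rw [map_sum]; simp [map_smul]
            _ = β (k i i₀) := by
                rw [hx i, hcomm (k i)]; rfl⟩
    choose z hz using key
    refine ⟨fun j i₀ => z i₀ j, ?_⟩
    intro i
    funext i₀
    calc (∑ j, op (a i j) • fun i₀ => z i₀ j) i₀
        = ∑ j, op (a i j) • z i₀ j := by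
          rw [Finset.sum_apply]; rfl
      _ = k i i₀ := hz i₀ i
  · -- direct sums
    intro ι M _ _ hM
    intro P _ _ f hfinj hfrd
    intro m n a k ⟨x, hx⟩
    have key : ∀ i₀ : ι, ∃ z : Fin n → M i₀,
        ∀ i, (∑ j, op (a i j) • z j) = k i i₀ := by
      intro i₀
      obtain ⟨X, _, _, α, β, hβinj, hβrd, hcomm⟩ :=
        exists_rd_pushout R (Π₀ i, M i) P (M i₀) f hfinj hfrd (DFinsupp.lapply i₀)
      exact hM i₀ X β hβinj hβrd m n a (fun i => k i i₀)
        ⟨fun j => α (x j), by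
          intro i
          calc (∑ j, op (a i j) • α (x j)) = α (∑ j, op (a i j) • x j) := by
                rw [map_sum]; simp [map_smul]
            _ = β (k i i₀) := by
                rw [hx i, hcomm (k i)]; rfl⟩
    choose z hz using key
    set s : Finset ι := Finset.univ.biUnion (fun i : Fin m => (k i).support) with hs
    refine ⟨fun j => DFinsupp.mk s (fun i₀ => z i₀.1 j), ?_⟩
    intro i
    ext i₀
    have happ : (∑ j, op (a i j) • DFinsupp.mk s fun i₀ => z i₀.1 j) i₀
        = ∑ j, (op (a i j) • DFinsupp.mk s fun i₀ => z i₀.1 j) i₀ :=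
      map_sum (DFinsupp.lapply (R := Rᵐᵒᵖ) i₀) _ _
    rw [happ]
    by_cases h : i₀ ∈ s
    · have : ∀ j, (op (a i j) • DFinsupp.mk s fun i₀ => z i₀.1 j) i₀
          = op (a i j) • z i₀ j := by
        intro j
        rw [DFinsupp.smul_apply, DFinsupp.mk_apply, dif_pos h]
      rw [Finset.sum_congr rfl (fun j _ => this j)]
      exact hz i₀ i
    · have hk : k i i₀ = 0 := by
        by_contra hne
        exact h (Finset.mem_biUnion.2 ⟨i, Finset.mem_univ i,
          DFinsupp.mem_support_iff.2 hne⟩)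
      rw [hk]
      refine Finset.sum_eq_zero fun j _ => ?_
      rw [DFinsupp.smul_apply, DFinsupp.mk_apply, dif_neg h, smul_zero]
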